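/- There is a constant K ≥ 1, depending only on A and p, such that for any two p-dimensional subspaces A₁ and A₂ of A one has K⁻¹·α(⋀^p A₁, ⋀^p A₂) ≤ α^Haus(A₁, A₂) ≤ K·α(⋀^p A₁, ⋀^p A₂), where ⋀^p A₁ and ⋀^p A₂ are the corresponding lines in the exterior power ⋀^p A. -/

import Mathlib

/-!
Lemma: for `p`-dimensional subspaces `A₁, A₂` of `A`, the Hausdorff distance (for the
angle metric) between the sets of lines of `A₁` and of `A₂` is comparable, up to a
constant depending only on `A` and `p`, with the angle between the lines `⋀^p A₁` and
`⋀^p A₂` in `⋀^p A` (for the canonical inner product on `⋀^p A`).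
-/

open scoped RealInnerProductSpace

noncomputable section

variable {A : Type*} [NormedAddCommGroup A] [InnerProductSpace ℝ A] [FiniteDimensional ℝ A]

/-- The angle `α(x, y) = arccos (|⟨x,y⟫| / (‖x‖ ‖y‖))` between the lines spanned by `x` and
`y`. -/
noncomputable def lineAngle (x y : A) : ℝ :=
  Real.arccos (|⟪x, y⟫| / (‖x‖ * ‖y‖))

/-- The Hausdorff distance, with respect to the angle metric, between the set of lines
contained in `A₁` and the set of lines contained in `A₂`. -/
noncomputable def hausAngle (A₁ A₂ : Submodule ℝ A) : ℝ :=
  max (⨆ x : {x : A // x ∈ A₁ ∧ x ≠ 0}, ⨅ y : {y : A // y ∈ A₂ ∧ y ≠ 0}, lineAngle x.1 y.1)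
      (⨆ y : {y : A // y ∈ A₂ ∧ y ≠ 0}, ⨅ x : {x : A // x ∈ A₁ ∧ x ≠ 0}, lineAngle y.1 x.1)

/-- The image of `⋀^n U` in `⋀^n A` under the map induced by the inclusion `U ⊆ A`,
i.e. the span of the decomposable elements `v₁ ∧ ⋯ ∧ vₙ` with all `vᵢ ∈ U`. -/
noncomputable def subWedge (U : Submodule ℝ A) (n : ℕ) : Submodule ℝ (⋀[ℝ]^n A) :=
  Submodule.span ℝ {x : ⋀[ℝ]^n A | ∃ v : Fin n → A, (∀ i, v i ∈ U) ∧
    (x : ExteriorAlgebra ℝ A) = ExteriorAlgebra.ιMulti ℝ n v}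

/-- The angle between the lines spanned by `x` and `y`, with respect to the inner product
given by a bilinear form `B`. -/
noncomputable def formAngle {F : Type*} [AddCommGroup F] [Module ℝ F]
    (B : F →ₗ[ℝ] F →ₗ[ℝ] ℝ) (x y : F) : ℝ :=
  Real.arccos (|B x y| / (Real.sqrt (B x x) * Real.sqrt (B y y)))


set_option maxHeartbeats 1600000

/-- arccos is antitone (globally, thanks to junk values). -/
lemma arccos_anti {s t : ℝ} (h : s ≤ t) : Real.arccos t ≤ Real.arccos s := by
  rw [Real.arccos_eq_pi_div_two_sub_arcsin, Real.arccos_eq_pi_div_two_sub_arcsin]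
  exact sub_le_sub_left (Real.monotone_arcsin h) _

/-- Weierstrass-type product bound. -/
lemma one_sub_sum_le_prod {ι : Type*} (s : Finset ι) (f : ι → ℝ)
    (h0 : ∀ i ∈ s, 0 ≤ f i) (h1 : ∀ i ∈ s, f i ≤ 1) :
    1 - ∑ i ∈ s, f i ≤ ∏ i ∈ s, (1 - f i) := by
  classical
  induction s using Finset.induction_on with
  | empty => simp
  | @insert a s' hx ih =>
    rw [Finset.sum_insert hx, Finset.prod_insert hx]
    have h0' : ∀ i ∈ s', 0 ≤ f i := fun i hi => h0 i (Finset.mem_insert_of_mem hi)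
    have h1' : ∀ i ∈ s', f i ≤ 1 := fun i hi => h1 i (Finset.mem_insert_of_mem hi)
    have ha0 : 0 ≤ f a := h0 a (Finset.mem_insert_self _ _)
    have ha1 : f a ≤ 1 := h1 a (Finset.mem_insert_self _ _)
    have hp : ∏ i ∈ s', (1 - f i) ≤ 1 := by
      apply Finset.prod_le_one
      · exact fun i hi => by linarith [h1' i hi]
      · exact fun i hi => by linarith [h0' i hi]
    have := ih h0' h1'
    nlinarith [this, hp]

/-- Determinant of a small perturbation of the identity. -/
lemma det_one_sub_ge {p : ℕ} (G : Matrix (Fin p) (Fin p) ℝ) (δ : ℝ)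
    (hδ0 : 0 ≤ δ) (hδ1 : δ ≤ 1)
    (hd0 : ∀ i, G i i ≤ 1) (hd1 : ∀ i, 1 - G i i ≤ δ ^ 2) (hd2 : ∀ i, 0 ≤ G i i)
    (hoff : ∀ i j, i ≠ j → |G i j| ≤ δ) :
    1 - ((p : ℝ) + (Nat.factorial p : ℝ)) * δ ^ 2 ≤ G.det := by
  classical
  have habs : ∀ i j, |G i j| ≤ 1 := by
    intro i j
    by_cases h : i = j
    · subst h; rw [abs_le]; constructor <;> nlinarith [hd0 i, hd2 i]
    · exact (hoff i j h).trans hδ1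
  rw [Matrix.det_apply]
  simp only [Units.smul_def, zsmul_eq_mul]
  rw [← Finset.add_sum_erase _ _ (Finset.mem_univ (1 : Equiv.Perm (Fin p)))]
  have hid : ((Equiv.Perm.sign (1 : Equiv.Perm (Fin p)) : ℤ) : ℝ) * ∏ i, G ((1 : Equiv.Perm (Fin p)) i) i
      = ∏ i, G i i := by simp
  rw [hid]
  have hmain : 1 - (p : ℝ) * δ ^ 2 ≤ ∏ i, G i i := by
    have := one_sub_sum_le_prod Finset.univ (fun i => 1 - G i i)
      (fun i _ => by linarith [hd0 i]) (fun i _ => by linarith [hd2 i])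
    simp only [sub_sub_cancel] at this
    refine le_trans ?_ this
    have : ∑ i : Fin p, (1 - G i i) ≤ ∑ _i : Fin p, δ ^ 2 :=
      Finset.sum_le_sum fun i _ => hd1 i
    simp only [Finset.sum_const, Finset.card_univ, Fintype.card_fin, nsmul_eq_mul] at this
    linarith
  have hrest : |∑ σ ∈ (Finset.univ.erase (1 : Equiv.Perm (Fin p))),
      ((Equiv.Perm.sign σ : ℤ) : ℝ) * ∏ i, G (σ i) i| ≤ (Nat.factorial p : ℝ) * δ ^ 2 := by
    calc |∑ σ ∈ (Finset.univ.erase (1 : Equiv.Perm (Fin p))),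
        ((Equiv.Perm.sign σ : ℤ) : ℝ) * ∏ i, G (σ i) i|
        ≤ ∑ σ ∈ (Finset.univ.erase (1 : Equiv.Perm (Fin p))),
          |((Equiv.Perm.sign σ : ℤ) : ℝ) * ∏ i, G (σ i) i| := Finset.abs_sum_le_sum_abs _ _
      _ ≤ ∑ _σ ∈ (Finset.univ.erase (1 : Equiv.Perm (Fin p))), δ ^ 2 := by
          apply Finset.sum_le_sum
          intro σ hσ
          have hσ1 : σ ≠ 1 := (Finset.mem_erase.mp hσ).1
          -- |sign| = 1
          have hsgn : |((Equiv.Perm.sign σ : ℤ) : ℝ)| = 1 := by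
            rcases Int.units_eq_one_or (Equiv.Perm.sign σ) with h | h <;> simp [h]
          rw [abs_mul, hsgn, one_mul]
          -- two moved points
          obtain ⟨i₀, hi₀⟩ : ∃ i, σ i ≠ i := by
            by_contra h
            push_neg at h
            exact hσ1 (Equiv.ext fun i => h i)
          set i₁ := σ i₀ with hi₁def
          have hi₁ : σ i₁ ≠ i₁ := fun h => hi₀ (σ.injective h)
          have hne : i₀ ≠ i₁ := fun h => hi₀ h.symm
          have key : ∏ i, |G (σ i) i| ≤ δ ^ 2 := by
            have hsplit : ({i₀, i₁} : Finset (Fin p)) ⊆ Finset.univ := Finset.subset_univ _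
            rw [← Finset.prod_sdiff hsplit]
            have h2 : ∏ i ∈ ({i₀, i₁} : Finset (Fin p)), |G (σ i) i| = |G (σ i₀) i₀| * |G (σ i₁) i₁| :=
              Finset.prod_pair hne
            have hb1 : |G (σ i₀) i₀| ≤ δ := hoff _ _ hi₀
            have hb2 : |G (σ i₁) i₁| ≤ δ := hoff _ _ hi₁
            have hrest1 : ∏ i ∈ (Finset.univ \ ({i₀, i₁} : Finset (Fin p))), |G (σ i) i| ≤ 1 :=
              Finset.prod_le_one (fun i _ => abs_nonneg _) (fun i _ => habs _ _)
            have hrest0 : 0 ≤ ∏ i ∈ (Finset.univ \ ({i₀, i₁} : Finset (Fin p))), |G (σ i) i| :=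
              Finset.prod_nonneg fun i _ => abs_nonneg _
            rw [h2]
            have hb : |G (σ i₀) i₀| * |G (σ i₁) i₁| ≤ δ ^ 2 := by
              nlinarith [abs_nonneg (G (σ i₀) i₀), abs_nonneg (G (σ i₁) i₁)]
            have hbnn : 0 ≤ |G (σ i₀) i₀| * |G (σ i₁) i₁| :=
              mul_nonneg (abs_nonneg _) (abs_nonneg _)
            nlinarith
          calc |∏ i, G (σ i) i| = ∏ i, |G (σ i) i| := Finset.abs_prod _ _
            _ ≤ δ ^ 2 := key
      _ ≤ (Nat.factorial p : ℝ) * δ ^ 2 := by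
          rw [Finset.sum_const, nsmul_eq_mul]
          have hcard : ((Finset.univ.erase (1 : Equiv.Perm (Fin p))).card : ℝ)
              ≤ (Nat.factorial p : ℝ) := by
            have := Finset.card_erase_le (s := (Finset.univ : Finset (Equiv.Perm (Fin p))))
              (a := (1 : Equiv.Perm (Fin p)))
            have hcard2 : (Finset.univ : Finset (Equiv.Perm (Fin p))).card = Nat.factorial p := by
              simp [Finset.card_univ, Fintype.card_perm]
            exact_mod_cast hcard2 ▸ this
          nlinarith [sq_nonneg δ]
  have := abs_le.mp hrest
  push_cast
  push_cast at hmain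
  linarith [this.1, hmain]



lemma core_det {p : ℕ} (U V : Submodule ℝ A) (hU : Module.finrank ℝ U = p)
    (e : OrthonormalBasis (Fin p) ℝ U) (v : OrthonormalBasis (Fin p) ℝ V) :
    |(Matrix.of fun i j => (⟪(e i : A), (v j : A)⟫ : ℝ)).det| ≤ 1 ∧
    ∀ x : A, x ∈ U → ‖x‖ = 1 →
      |(Matrix.of fun i j => (⟪(e i : A), (v j : A)⟫ : ℝ)).det|
        ≤ ‖(V.orthogonalProjectionOnto x : A)‖ := by
  classical
  set M : Matrix (Fin p) (Fin p) ℝ := Matrix.of fun i j => (⟪(e i : A), (v j : A)⟫ : ℝ) with hM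
  set S : U →ₗ[ℝ] V := (V.orthogonalProjectionOnto).toLinearMap.comp U.subtype with hS
  have hSapp : ∀ x : U, S x = V.orthogonalProjectionOnto (x : A) := fun x => rfl
  set T : U →ₗ[ℝ] U := (LinearMap.adjoint S).comp S with hT
  have hTinner : ∀ x y : U, ⟪T x, y⟫ = ⟪S x, S y⟫ := by
    intro x y
    rw [hT, LinearMap.comp_apply, LinearMap.adjoint_inner_left]
  have hTsymm : T.IsSymmetric := by
    intro x y
    calc (⟪T x, y⟫ : ℝ) = ⟪S x, S y⟫ := hTinner x y
      _ = ⟪S y, S x⟫ := real_inner_comm _ _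
      _ = ⟪T y, x⟫ := (hTinner y x).symm
      _ = ⟪x, T y⟫ := real_inner_comm _ _
  -- projection kills nothing against V
  have hproj : ∀ (x : A) (w : V), ⟪(V.orthogonalProjectionOnto x : A), (w : A)⟫ = ⟪x, (w : A)⟫ := by
    intro x w
    have h0 : ⟪x - V.orthogonalProjectionOnto x, (w : A)⟫ = 0 :=
      Submodule.starProjection_inner_eq_zero x _ w.2
    rw [inner_sub_left] at h0
    linarith
  -- Gram identity
  have hgram : ∀ x y : U, ⟪S x, S y⟫ = ∑ k, (⟪(x : A), (v k : A)⟫ * ⟪(y : A), (v k : A)⟫ : ℝ) := by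
    intro x y
    rw [← v.sum_inner_mul_inner (S x) (S y)]
    congr 1
    ext k
    have h1 : ⟪S x, v k⟫ = (⟪(x : A), (v k : A)⟫ : ℝ) := by
      rw [Submodule.coe_inner, hSapp, hproj]
    have h2 : ⟪v k, S y⟫ = (⟪(y : A), (v k : A)⟫ : ℝ) := by
      rw [real_inner_comm, Submodule.coe_inner, hSapp, hproj]
    rw [h1, h2]
  -- the matrix of T in the basis e is M * Mᵀ
  have hmat : LinearMap.toMatrix e.toBasis e.toBasis T = M * M.transpose := by
    ext i j
    rw [LinearMap.toMatrix_apply, OrthonormalBasis.coe_toBasis,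
      OrthonormalBasis.coe_toBasis_repr_apply, OrthonormalBasis.repr_apply_apply]
    rw [real_inner_comm, hTinner, hgram]
    rw [Matrix.mul_apply]
    congr 1
    ext k
    simp only [Matrix.transpose_apply, hM, Matrix.of_apply]
    ring
  have hdetT : LinearMap.det T = M.det ^ 2 := by
    rw [← LinearMap.det_toMatrix e.toBasis, hmat, Matrix.det_mul, Matrix.det_transpose, sq]
  -- eigenvalues
  set b := hTsymm.eigenvectorBasis hU with hb
  set μ := hTsymm.eigenvalues hU with hμ
  have happly : ∀ i, T (b i) = μ i • b i := fun i => hTsymm.apply_eigenvectorBasis hU i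
  have hnorm_b : ∀ i, ‖b i‖ = 1 := fun i => b.orthonormal.1 i
  have hμval : ∀ i, μ i = ‖S (b i)‖ ^ 2 := by
    intro i
    have h1 : ⟪T (b i), b i⟫ = μ i := by
      rw [happly, real_inner_smul_left, real_inner_self_eq_norm_sq, hnorm_b]
      ring
    rw [← h1, hTinner, real_inner_self_eq_norm_sq]
  have hScontr : ∀ x : U, ‖S x‖ ≤ ‖x‖ := by
    intro x
    rw [hSapp]
    calc ‖(V.orthogonalProjectionOnto (x : A) : V)‖
        ≤ ‖V.orthogonalProjectionOnto‖ * ‖(x : A)‖ := (V.orthogonalProjectionOnto).le_opNorm _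
      _ ≤ 1 * ‖(x : A)‖ := by
          have := Submodule.orthogonalProjectionOnto_norm_le V
          have h0 : (0 : ℝ) ≤ ‖(x : A)‖ := norm_nonneg _
          nlinarith
      _ = ‖x‖ := by rw [one_mul, Submodule.coe_norm]
  have hμ0 : ∀ i, 0 ≤ μ i := fun i => by rw [hμval i]; positivity
  have hμ1 : ∀ i, μ i ≤ 1 := by
    intro i
    rw [hμval i]
    have := hScontr (b i)
    rw [hnorm_b] at this
    nlinarith [norm_nonneg (S (b i))]
  -- det T = ∏ μ
  have hdiag : LinearMap.toMatrix b.toBasis b.toBasis T = Matrix.diagonal μ := by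
    ext i j
    rw [LinearMap.toMatrix_apply, OrthonormalBasis.coe_toBasis,
      OrthonormalBasis.coe_toBasis_repr_apply, OrthonormalBasis.repr_apply_apply]
    rw [happly, real_inner_smul_right]
    have := orthonormal_iff_ite.mp b.orthonormal i j
    rw [this, Matrix.diagonal_apply]
    by_cases h : i = j <;> simp [h]
  have hdetprod : LinearMap.det T = ∏ i, μ i := by
    rw [← LinearMap.det_toMatrix b.toBasis, hdiag, Matrix.det_diagonal]
  have hprod : M.det ^ 2 = ∏ i, μ i := by rw [← hdetT, hdetprod]
  have hprod_le_one : ∏ i, μ i ≤ 1 :=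
    Finset.prod_le_one (fun i _ => hμ0 i) (fun i _ => hμ1 i)
  constructor
  · have h1 : M.det ^ 2 ≤ 1 := hprod.le.trans hprod_le_one
    have := Real.sqrt_le_sqrt h1
    rwa [Real.sqrt_sq_eq_abs, Real.sqrt_one] at this
  · intro x hxU hx1
    set x' : U := ⟨x, hxU⟩ with hx'
    have hx'norm : ‖x'‖ = 1 := hx1
    -- quadratic form lower bound
    have hq : ⟪T x', x'⟫ = ∑ i, μ i * ⟪b i, x'⟫ ^ 2 := by
      rw [← b.sum_inner_mul_inner (T x') x']
      congr 1
      ext i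
      have h1 : ⟪T x', b i⟫ = μ i * ⟪x', b i⟫ := by
        rw [hTsymm x' (b i), happly, real_inner_smul_right]
      rw [h1, real_inner_comm x' (b i)]
      ring
    have hpars : ∑ i, ⟪b i, x'⟫ ^ 2 = (1 : ℝ) := by
      have h := b.sum_inner_mul_inner x' x'
      rw [real_inner_self_eq_norm_sq, hx'norm, one_pow] at h
      calc ∑ i, (⟪b i, x'⟫ : ℝ) ^ 2 = ∑ i, (⟪x', b i⟫ : ℝ) * ⟪b i, x'⟫ := by
            apply Finset.sum_congr rfl
            intro i _
            rw [real_inner_comm x' (b i)]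
            ring
        _ = 1 := h
    have hterm : ∀ i, (∏ j, μ j) * ⟪b i, x'⟫ ^ 2 ≤ μ i * ⟪b i, x'⟫ ^ 2 := by
      intro i
      have hle : ∏ j, μ j ≤ μ i := by
        rw [← Finset.mul_prod_erase Finset.univ μ (Finset.mem_univ i)]
        have : ∏ j ∈ Finset.univ.erase i, μ j ≤ 1 :=
          Finset.prod_le_one (fun j _ => hμ0 j) (fun j _ => hμ1 j)
        nlinarith [hμ0 i, Finset.prod_nonneg (fun j (_ : j ∈ Finset.univ.erase i) => hμ0 j)]
      nlinarith [sq_nonneg (⟪b i, x'⟫ : ℝ)]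
    have hlow : M.det ^ 2 ≤ ⟪T x', x'⟫ := by
      rw [hq, hprod]
      calc (∏ i, μ i) = (∏ i, μ i) * ∑ i, ⟪b i, x'⟫ ^ 2 := by rw [hpars, mul_one]
        _ = ∑ i, (∏ j, μ j) * ⟪b i, x'⟫ ^ 2 := Finset.mul_sum _ _ _
        _ ≤ ∑ i, μ i * ⟪b i, x'⟫ ^ 2 := Finset.sum_le_sum fun i _ => hterm i
    have hTx : ⟪T x', x'⟫ = ‖(V.orthogonalProjectionOnto x : A)‖ ^ 2 := by
      rw [hTinner, real_inner_self_eq_norm_sq, hSapp]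
      rw [Submodule.coe_norm]
    rw [hTx] at hlow
    have := Real.sqrt_le_sqrt hlow
    rwa [Real.sqrt_sq_eq_abs, Real.sqrt_sq (norm_nonneg _)] at this



/-- A module-valued alternating map in `p = dim U` variables factors through the
determinant. -/
lemma alt_map_det {p : ℕ} {N : Type*} [AddCommGroup N] [Module ℝ N]
    (U : Submodule ℝ A) (bU : Module.Basis (Fin p) ℝ U)
    (f : U [⋀^Fin p]→ₗ[ℝ] N) (w : Fin p → U) :
    f w = bU.det w • f ⇑bU := by
  classical
  rw [← sub_eq_zero]
  rw [← Module.forall_dual_apply_eq_zero_iff ℝ (f w - bU.det w • f ⇑bU)]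
  intro φ
  have h := (φ.compAlternatingMap f).eq_smul_basis_det bU
  have h1 : φ (f w) = φ (f ⇑bU) * bU.det w := by
    have := congrArg (fun g => g w) h
    simpa using this
  rw [map_sub, map_smul, h1]
  simp [mul_comm]

/-- Every element of `subWedge U p` is a multiple of the basis wedge. -/
lemma subWedge_eq_smul {p : ℕ} (U : Submodule ℝ A) (bU : Module.Basis (Fin p) ℝ U)
    (ω : ⋀[ℝ]^p A) (hω : ω ∈ subWedge U p) :
    ∃ a : ℝ, (ω : ExteriorAlgebra ℝ A)
      = a • ExteriorAlgebra.ιMulti ℝ p (fun i => (bU i : A)) := by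
  classical
  have hmem : ExteriorAlgebra.ιMulti ℝ p (fun i => (bU i : A)) ∈ ⋀[ℝ]^p A :=
    ExteriorAlgebra.ιMulti_range ℝ p (Set.mem_range_self _)
  set ωe : ⋀[ℝ]^p A := ⟨ExteriorAlgebra.ιMulti ℝ p (fun i => (bU i : A)), hmem⟩ with hωe
  have hspan : subWedge U p ≤ Submodule.span ℝ {ωe} := by
    rw [subWedge, Submodule.span_le]
    rintro x ⟨w, hw, hxw⟩
    set w' : Fin p → U := fun i => ⟨w i, hw i⟩ with hw'
    set f : U [⋀^Fin p]→ₗ[ℝ] ExteriorAlgebra ℝ A :=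
      (ExteriorAlgebra.ιMulti ℝ p).compLinearMap U.subtype with hf
    have key : ExteriorAlgebra.ιMulti ℝ p w
        = bU.det w' • ExteriorAlgebra.ιMulti ℝ p (fun i => (bU i : A)) := by
      have h1 : f w' = ExteriorAlgebra.ιMulti ℝ p w := by
        rw [hf, AlternatingMap.compLinearMap_apply]
        congr 1
      have h2 : f ⇑bU = ExteriorAlgebra.ιMulti ℝ p (fun i => (bU i : A)) := by
        rw [hf, AlternatingMap.compLinearMap_apply]
        congr 1
      rw [← h1, ← h2]
      exact alt_map_det U bU f w'
    have hx : x = bU.det w' • ωe := by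
      apply Subtype.ext
      rw [hxw, key]
      rfl
    rw [SetLike.mem_coe, Submodule.mem_span_singleton]
    exact ⟨bU.det w', hx.symm⟩
  obtain ⟨a, ha⟩ := Submodule.mem_span_singleton.mp (hspan hω)
  refine ⟨a, ?_⟩
  rw [← ha]
  rfl




lemma lineAngle_nonneg (x y : A) : 0 ≤ lineAngle x y := Real.arccos_nonneg _

lemma lineAngle_le_pi_div_two (x y : A) : lineAngle x y ≤ Real.pi / 2 :=
  Real.arccos_le_pi_div_two.mpr (by positivity)

lemma supInf_bounds {ι κ : Type*} (g : ι → κ → ℝ) (h0 : ∀ i j, 0 ≤ g i j)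
    (h1 : ∀ i j, g i j ≤ Real.pi / 2) :
    0 ≤ (⨆ i, ⨅ j, g i j) ∧ (⨆ i, ⨅ j, g i j) ≤ Real.pi / 2 := by
  have hbelow : ∀ i, BddBelow (Set.range (g i)) :=
    fun i => ⟨0, by rintro _ ⟨j, rfl⟩; exact h0 i j⟩
  have hinf0 : ∀ i, 0 ≤ ⨅ j, g i j := by
    intro i
    rcases isEmpty_or_nonempty κ with h | h
    · rw [Real.iInf_of_isEmpty]
    · exact le_ciInf fun j => h0 i j
  have hinf1 : ∀ i, (⨅ j, g i j) ≤ Real.pi / 2 := by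
    intro i
    rcases isEmpty_or_nonempty κ with h | h
    · rw [Real.iInf_of_isEmpty]; linarith [Real.pi_pos]
    · exact (ciInf_le (hbelow i) (Classical.arbitrary κ)).trans (h1 i _)
  rcases isEmpty_or_nonempty ι with h | h
  · rw [Real.iSup_of_isEmpty]
    exact ⟨le_refl 0, by linarith [Real.pi_pos]⟩
  · have hbdd : BddAbove (Set.range fun i => ⨅ j, g i j) :=
      ⟨Real.pi / 2, by rintro _ ⟨i, rfl⟩; exact hinf1 i⟩
    constructor
    · exact (hinf0 (Classical.arbitrary ι)).trans (le_ciSup hbdd (Classical.arbitrary ι))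
    · exact ciSup_le fun i => hinf1 i

lemma hausAngle_nonneg (A₁ A₂ : Submodule ℝ A) : 0 ≤ hausAngle A₁ A₂ := by
  rw [hausAngle]
  apply le_max_of_le_left
  exact (supInf_bounds (fun (x : {x : A // x ∈ A₁ ∧ x ≠ 0})
    (y : {y : A // y ∈ A₂ ∧ y ≠ 0}) => lineAngle x.1 y.1)
    (fun _ _ => lineAngle_nonneg _ _) (fun _ _ => lineAngle_le_pi_div_two _ _)).1

/-- One half of the easy direction: the `A₁ → A₂` part of the Hausdorff distance is at most
the angle `arccos |det M|`. -/
lemma dirb {p : ℕ} (U V : Submodule ℝ A) (hU : Module.finrank ℝ U = p)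
    (e : OrthonormalBasis (Fin p) ℝ U) (v : OrthonormalBasis (Fin p) ℝ V) :
    (⨆ x : {x : A // x ∈ U ∧ x ≠ 0}, ⨅ y : {y : A // y ∈ V ∧ y ≠ 0}, lineAngle x.1 y.1)
      ≤ Real.arccos |(Matrix.of fun i j => (⟪(e i : A), (v j : A)⟫ : ℝ)).det| := by
  obtain ⟨hdet1, hproj⟩ := core_det U V hU e v
  set c : ℝ := |(Matrix.of fun i j => (⟪(e i : A), (v j : A)⟫ : ℝ)).det| with hc_def
  rcases isEmpty_or_nonempty {x : A // x ∈ U ∧ x ≠ 0} with h | h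
  · rw [Real.iSup_of_isEmpty]
    exact Real.arccos_nonneg _
  apply ciSup_le
  rintro ⟨x, hxU, hx0⟩
  have hbelow : BddBelow (Set.range fun y : {y : A // y ∈ V ∧ y ≠ 0} => lineAngle x y.1) :=
    ⟨0, by rintro _ ⟨y, rfl⟩; exact lineAngle_nonneg _ _⟩
  have hxn : ‖x‖ ≠ 0 := norm_ne_zero_iff.mpr hx0
  have hunit : ‖‖x‖⁻¹ • x‖ = 1 := norm_smul_inv_norm hx0
  have hmem : ‖x‖⁻¹ • x ∈ U := U.smul_mem _ hxU
  have hc : c ≤ ‖(V.orthogonalProjectionOnto (‖x‖⁻¹ • x) : A)‖ := hproj _ hmem hunit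
  have hPsmul : ((V.orthogonalProjectionOnto (‖x‖⁻¹ • x) : V) : A)
      = ‖x‖⁻¹ • ((V.orthogonalProjectionOnto x : V) : A) := by
    rw [map_smul, Submodule.coe_smul]
  rw [hPsmul, norm_smul, Real.norm_eq_abs, abs_inv, abs_norm] at hc
  by_cases hP : ((V.orthogonalProjectionOnto x : V) : A) = 0
  · rw [hP, norm_zero, mul_zero] at hc
    have hc0 : c = 0 := le_antisymm hc (abs_nonneg _)
    rw [hc0, Real.arccos_zero]
    rcases isEmpty_or_nonempty {y : A // y ∈ V ∧ y ≠ 0} with hk | hk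
    · simp only [Real.iInf_of_isEmpty]
      linarith [Real.pi_pos]
    · exact (ciInf_le hbelow (Classical.arbitrary _)).trans (lineAngle_le_pi_div_two _ _)
  · have hy : ((V.orthogonalProjectionOnto x : V) : A) ∈ V ∧ ((V.orthogonalProjectionOnto x : V) : A) ≠ 0 :=
      ⟨(V.orthogonalProjectionOnto x).2, hP⟩
    refine (ciInf_le hbelow ⟨_, hy⟩).trans ?_
    have hinner : (⟪x, ((V.orthogonalProjectionOnto x : V) : A)⟫ : ℝ)
        = ‖((V.orthogonalProjectionOnto x : V) : A)‖ ^ 2 := by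
      have h0 : ⟪x - V.orthogonalProjectionOnto x, ((V.orthogonalProjectionOnto x : V) : A)⟫ = (0 : ℝ) :=
        Submodule.starProjection_inner_eq_zero x _ (V.orthogonalProjectionOnto x).2
      rw [inner_sub_left] at h0
      rw [← real_inner_self_eq_norm_sq]
      linarith
    have hPn : ‖((V.orthogonalProjectionOnto x : V) : A)‖ ≠ 0 := norm_ne_zero_iff.mpr hP
    rw [lineAngle, hinner]
    apply arccos_anti
    have habs : |(‖((V.orthogonalProjectionOnto x : V) : A)‖ : ℝ) ^ 2|
        = ‖((V.orthogonalProjectionOnto x : V) : A)‖ ^ 2 := abs_of_nonneg (sq_nonneg _)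
    rw [habs]
    have heq : ‖((V.orthogonalProjectionOnto x : V) : A)‖ ^ 2
        / (‖x‖ * ‖((V.orthogonalProjectionOnto x : V) : A)‖)
        = ‖x‖⁻¹ * ‖((V.orthogonalProjectionOnto x : V) : A)‖ := by
      field_simp
    rw [heq]
    exact hc

/-- The hard direction, one-sided. -/
lemma dira {p : ℕ} (hp : p ≠ 0) (U V : Submodule ℝ A)
    (e : OrthonormalBasis (Fin p) ℝ U) (v : OrthonormalBasis (Fin p) ℝ V) :
    Real.arccos |(Matrix.of fun i j => (⟪(e i : A), (v j : A)⟫ : ℝ)).det|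
      ≤ (Real.pi / 2) * Real.sqrt ((p : ℝ) + (Nat.factorial p : ℝ))
        * (⨆ x : {x : A // x ∈ U ∧ x ≠ 0}, ⨅ y : {y : A // y ∈ V ∧ y ≠ 0},
            lineAngle x.1 y.1) := by
  classical
  haveI : Nonempty (Fin p) := ⟨⟨0, Nat.pos_of_ne_zero hp⟩⟩
  set M : Matrix (Fin p) (Fin p) ℝ := Matrix.of fun i j => (⟪(e i : A), (v j : A)⟫ : ℝ) with hM
  set hS : ℝ := ⨆ x : {x : A // x ∈ U ∧ x ≠ 0}, ⨅ y : {y : A // y ∈ V ∧ y ≠ 0},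
    lineAngle x.1 y.1 with hS_def
  obtain ⟨hS0, hSpi⟩ := supInf_bounds
    (fun (x : {x : A // x ∈ U ∧ x ≠ 0}) (y : {y : A // y ∈ V ∧ y ≠ 0}) => lineAngle x.1 y.1)
    (fun _ _ => lineAngle_nonneg _ _) (fun _ _ => lineAngle_le_pi_div_two _ _)
  have hnorm_e : ∀ i, ‖(e i : A)‖ = 1 := fun i => e.orthonormal.1 i
  have hnorm_v : ∀ i, ‖(v i : A)‖ = 1 := fun i => v.orthonormal.1 i
  have hne_e : ∀ i, (e i : A) ≠ 0 := fun i h => by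
    have := hnorm_e i; rw [h, norm_zero] at this; norm_num at this
  have hne_v : ∀ i, (v i : A) ≠ 0 := fun i h => by
    have := hnorm_v i; rw [h, norm_zero] at this; norm_num at this
  haveI hkne : Nonempty {y : A // y ∈ V ∧ y ≠ 0} :=
    ⟨⟨(v ⟨0, Nat.pos_of_ne_zero hp⟩ : A), (v _).2, hne_v _⟩⟩
  set f : Fin p → A := fun i => ((V.orthogonalProjectionOnto (e i : A) : V) : A) with hf
  have hproj_le : ∀ z : A, ‖((V.orthogonalProjectionOnto z : V) : A)‖ ≤ ‖z‖ := by
    intro z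
    calc ‖((V.orthogonalProjectionOnto z : V) : A)‖ = ‖(V.orthogonalProjectionOnto z : V)‖ := rfl
      _ ≤ ‖V.orthogonalProjectionOnto‖ * ‖z‖ := (V.orthogonalProjectionOnto).le_opNorm _
      _ ≤ 1 * ‖z‖ := by
          have := Submodule.orthogonalProjectionOnto_norm_le V
          have h0 : (0 : ℝ) ≤ ‖z‖ := norm_nonneg _
          nlinarith
      _ = ‖z‖ := one_mul _
  have hfle1 : ∀ i, ‖f i‖ ≤ 1 := fun i => by
    rw [hf]; simpa [hnorm_e i] using hproj_le (e i : A)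
  have hinner_proj : ∀ (z : A) (w : A), w ∈ V →
      (⟪z, w⟫ : ℝ) = ⟪((V.orthogonalProjectionOnto z : V) : A), w⟫ := by
    intro z w hw
    have h0 : ⟪z - V.orthogonalProjectionOnto z, w⟫ = (0 : ℝ) :=
      Submodule.starProjection_inner_eq_zero z w hw
    rw [inner_sub_left] at h0
    linarith
  -- each basis vector of U is close to V
  have hkey : ∀ i, Real.arccos ‖f i‖ ≤ hS := by
    intro i
    have step1 : Real.arccos ‖f i‖
        ≤ ⨅ y : {y : A // y ∈ V ∧ y ≠ 0}, lineAngle (e i : A) y.1 := by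
      apply le_ciInf
      rintro ⟨y, hyV, hy0⟩
      rw [lineAngle]
      apply arccos_anti
      have hyn : (0 : ℝ) < ‖y‖ := norm_pos_iff.mpr hy0
      rw [hnorm_e i, one_mul]
      rw [div_le_iff₀ hyn]
      calc |(⟪(e i : A), y⟫ : ℝ)| = |(⟪f i, y⟫ : ℝ)| := by rw [hinner_proj _ _ hyV, hf]
        _ ≤ ‖f i‖ * ‖y‖ := abs_real_inner_le_norm _ _
    exact step1.trans (by
      have hbdd : BddAbove (Set.range fun x : {x : A // x ∈ U ∧ x ≠ 0} =>
          ⨅ y : {y : A // y ∈ V ∧ y ≠ 0}, lineAngle x.1 y.1) := by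
        refine ⟨Real.pi / 2, ?_⟩
        rintro _ ⟨x, rfl⟩
        exact (ciInf_le ⟨0, by rintro _ ⟨y, rfl⟩; exact lineAngle_nonneg _ _⟩
          (Classical.arbitrary _)).trans (lineAngle_le_pi_div_two _ _)
      exact le_ciSup hbdd (⟨(e i : A), (e i).2, hne_e i⟩ : {x : A // x ∈ U ∧ x ≠ 0}))
  have hcosS : 0 ≤ Real.cos hS :=
    Real.cos_nonneg_of_mem_Icc ⟨by linarith [Real.pi_pos], hSpi⟩
  have hcos : ∀ i, Real.cos hS ≤ ‖f i‖ := by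
    intro i
    have h1 : ‖f i‖ = Real.cos (Real.arccos ‖f i‖) :=
      (Real.cos_arccos (by linarith [norm_nonneg (f i)]) (hfle1 i)).symm
    rw [h1]
    exact Real.cos_le_cos_of_nonneg_of_le_pi (Real.arccos_nonneg _)
      (by linarith [Real.pi_pos]) (hkey i)
  set δ : ℝ := Real.sin hS with hδ_def
  have hδ0 : 0 ≤ δ := Real.sin_nonneg_of_nonneg_of_le_pi hS0 (by linarith [Real.pi_pos])
  have hδ1 : δ ≤ 1 := Real.sin_le_one _
  have hdefect : ∀ i, 1 - ‖f i‖ ^ 2 ≤ δ ^ 2 := by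
    intro i
    have h1 : Real.cos hS ^ 2 ≤ ‖f i‖ ^ 2 := pow_le_pow_left₀ hcosS (hcos i) 2
    have h2 : δ ^ 2 = 1 - Real.cos hS ^ 2 := Real.sin_sq hS
    linarith
  have hinner_ef : ∀ i, (⟪(e i : A), f i⟫ : ℝ) = ‖f i‖ ^ 2 := by
    intro i
    rw [hinner_proj (e i : A) (f i) (V.orthogonalProjectionOnto (e i : A)).2]
    rw [real_inner_self_eq_norm_sq]
  have hsubnorm : ∀ i, ‖(e i : A) - f i‖ ≤ δ := by
    intro i
    have h1 : ‖(e i : A) - f i‖ ^ 2 = 1 - ‖f i‖ ^ 2 := by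
      rw [norm_sub_sq_real, hinner_ef i, hnorm_e i]
      ring
    have h2 := hdefect i
    nlinarith [norm_nonneg ((e i : A) - f i)]
  -- Gram matrix entries
  have hM_proj : ∀ i k, M i k = (⟪f i, (v k : A)⟫ : ℝ) := by
    intro i k
    rw [hM, Matrix.of_apply, hinner_proj _ _ (v k).2, hf]
  have hGm : ∀ i j, (M * M.transpose) i j = (⟪f i, f j⟫ : ℝ) := by
    intro i j
    have h := v.sum_inner_mul_inner (V.orthogonalProjectionOnto (e i : A))
      (V.orthogonalProjectionOnto (e j : A))
    simp only [Submodule.coe_inner] at h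
    rw [Matrix.mul_apply, ← h]
    apply Finset.sum_congr rfl
    intro k _
    rw [Matrix.transpose_apply, hM_proj i k, hM_proj j k]
    rw [real_inner_comm (f j) ((v k : A))]
  -- determinant bound
  have hdetbound : 1 - ((p : ℝ) + (Nat.factorial p : ℝ)) * δ ^ 2 ≤ (M * M.transpose).det := by
    apply det_one_sub_ge _ δ hδ0 hδ1
    · intro i
      rw [hGm i i, real_inner_self_eq_norm_sq]
      nlinarith [hfle1 i, norm_nonneg (f i)]
    · intro i
      rw [hGm i i, real_inner_self_eq_norm_sq]
      exact hdefect i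
    · intro i
      rw [hGm i i, real_inner_self_eq_norm_sq]
      positivity
    · intro i j hij
      rw [hGm i j]
      have h1 : (⟪f i, f j⟫ : ℝ) = ⟪(e i : A), f j⟫ :=
        (hinner_proj (e i : A) (f j) (V.orthogonalProjectionOnto (e j : A)).2).symm
      have h2 : (⟪(e i : A), (e j : A)⟫ : ℝ) = 0 := by
        rw [← Submodule.coe_inner]
        exact e.orthonormal.2 hij
      have h3 : (⟪(e i : A), f j⟫ : ℝ) = ⟪(e i : A), f j - (e j : A)⟫ := by
        rw [inner_sub_right, h2]
        ring
      rw [h1, h3]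
      calc |(⟪(e i : A), f j - (e j : A)⟫ : ℝ)| ≤ ‖(e i : A)‖ * ‖f j - (e j : A)‖ :=
            abs_real_inner_le_norm _ _
        _ = ‖(e j : A) - f j‖ := by rw [hnorm_e i, one_mul, norm_sub_rev]
        _ ≤ δ := hsubnorm j
  have hdet2 : (M * M.transpose).det = M.det ^ 2 := by
    rw [Matrix.det_mul, Matrix.det_transpose, sq]
  rw [hdet2] at hdetbound
  -- final chain
  set C : ℝ := (p : ℝ) + (Nat.factorial p : ℝ) with hC_def
  have hC0 : 0 ≤ C := by positivity
  set θ : ℝ := Real.arccos |M.det| with hθ_def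
  have hθ0 : 0 ≤ θ := Real.arccos_nonneg _
  have hθpi : θ ≤ Real.pi / 2 := Real.arccos_le_pi_div_two.mpr (abs_nonneg _)
  have hsinθ : Real.sin θ = Real.sqrt (1 - M.det ^ 2) := by
    rw [hθ_def, Real.sin_arccos, sq_abs]
  have hs1 : Real.sin θ ≤ Real.sqrt C * δ := by
    rw [hsinθ]
    calc Real.sqrt (1 - M.det ^ 2) ≤ Real.sqrt (C * δ ^ 2) := by
          apply Real.sqrt_le_sqrt
          linarith
      _ = Real.sqrt C * δ := by
          rw [Real.sqrt_mul hC0, Real.sqrt_sq hδ0]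
  have hjordan : θ ≤ Real.pi / 2 * Real.sin θ := by
    have h := Real.mul_le_sin hθ0 hθpi
    have hπ := Real.pi_pos
    have h2 := mul_le_mul_of_nonneg_left h (by linarith : (0:ℝ) ≤ Real.pi / 2)
    have h3 : Real.pi / 2 * (2 / Real.pi * θ) = θ := by
      field_simp
    linarith
  have hsin_le : δ ≤ hS := Real.sin_le hS0
  calc θ ≤ Real.pi / 2 * Real.sin θ := hjordan
    _ ≤ Real.pi / 2 * (Real.sqrt C * δ) := by
        apply mul_le_mul_of_nonneg_left hs1
        linarith [Real.pi_pos]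
    _ ≤ Real.pi / 2 * (Real.sqrt C * hS) := by
        apply mul_le_mul_of_nonneg_left _ (by linarith [Real.pi_pos] : (0:ℝ) ≤ Real.pi / 2)
        exact mul_le_mul_of_nonneg_left hsin_le (Real.sqrt_nonneg _)
    _ = Real.pi / 2 * Real.sqrt C * hS := by ring


theorem hausdorff_angle_comparison (p : ℕ)
    -- `B` is the canonical inner product of `⋀^p A`, determined by
    -- `⟨u₁∧⋯∧u_p, v₁∧⋯∧v_p⟩ = det (⟨uᵢ, vⱼ⟩)ᵢⱼ`
    (B : (⋀[ℝ]^p A) →ₗ[ℝ] (⋀[ℝ]^p A) →ₗ[ℝ] ℝ)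
    (hB : ∀ (x y : ⋀[ℝ]^p A) (u v : Fin p → A),
      (x : ExteriorAlgebra ℝ A) = ExteriorAlgebra.ιMulti ℝ p u →
      (y : ExteriorAlgebra ℝ A) = ExteriorAlgebra.ιMulti ℝ p v →
      B x y = Matrix.det (Matrix.of fun i j => (⟪u i, v j⟫ : ℝ))) :
    ∃ K : ℝ, 1 ≤ K ∧
      ∀ A₁ A₂ : Submodule ℝ A, Module.finrank ℝ A₁ = p → Module.finrank ℝ A₂ = p →
        ∀ ω₁ ∈ subWedge A₁ p, ω₁ ≠ 0 → ∀ ω₂ ∈ subWedge A₂ p, ω₂ ≠ 0 →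
          K⁻¹ * formAngle B ω₁ ω₂ ≤ hausAngle A₁ A₂ ∧
          hausAngle A₁ A₂ ≤ K * formAngle B ω₁ ω₂ := by
  classical
  set C : ℝ := (p : ℝ) + (Nat.factorial p : ℝ) with hC_def
  have hC0 : (0 : ℝ) ≤ C := by positivity
  set K : ℝ := 2 + Real.pi * Real.sqrt C with hK_def
  have hsqrt0 : 0 ≤ Real.sqrt C := Real.sqrt_nonneg _
  have hπ := Real.pi_pos
  have hK1 : 1 ≤ K := by nlinarith
  have hK0 : 0 < K := by nlinarith
  refine ⟨K, hK1, ?_⟩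
  intro A₁ A₂ h₁ h₂ ω₁ hω₁ hω₁0 ω₂ hω₂ hω₂0
  -- orthonormal bases
  set e : OrthonormalBasis (Fin p) ℝ A₁ := (stdOrthonormalBasis ℝ A₁).reindex (finCongr h₁)
    with he_def
  set v : OrthonormalBasis (Fin p) ℝ A₂ := (stdOrthonormalBasis ℝ A₂).reindex (finCongr h₂)
    with hv_def
  set M : Matrix (Fin p) (Fin p) ℝ := Matrix.of fun i j => (⟪(e i : A), (v j : A)⟫ : ℝ)
    with hM_def
  -- decompose ω₁, ω₂
  set ue : Fin p → A := fun i => (e i : A) with hue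
  set uv : Fin p → A := fun i => (v i : A) with huv
  have hmem_e : ExteriorAlgebra.ιMulti ℝ p ue ∈ ⋀[ℝ]^p A :=
    ExteriorAlgebra.ιMulti_range ℝ p (Set.mem_range_self _)
  have hmem_v : ExteriorAlgebra.ιMulti ℝ p uv ∈ ⋀[ℝ]^p A :=
    ExteriorAlgebra.ιMulti_range ℝ p (Set.mem_range_self _)
  set ωe : ⋀[ℝ]^p A := ⟨ExteriorAlgebra.ιMulti ℝ p ue, hmem_e⟩ with hωe_def
  set ωv : ⋀[ℝ]^p A := ⟨ExteriorAlgebra.ιMulti ℝ p uv, hmem_v⟩ with hωv_def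
  have hcoe_basis_e : (fun i => ((e.toBasis i : A₁) : A)) = ue := by
    funext i
    rw [hue]
    simp only [OrthonormalBasis.coe_toBasis]
  have hcoe_basis_v : (fun i => ((v.toBasis i : A₂) : A)) = uv := by
    funext i
    rw [huv]
    simp only [OrthonormalBasis.coe_toBasis]
  obtain ⟨a, ha⟩ := subWedge_eq_smul A₁ e.toBasis ω₁ hω₁
  obtain ⟨b, hb⟩ := subWedge_eq_smul A₂ v.toBasis ω₂ hω₂
  rw [hcoe_basis_e] at ha
  rw [hcoe_basis_v] at hb
  have hω₁e : ω₁ = a • ωe := by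
    apply Subtype.ext
    rw [ha]
    rfl
  have hω₂v : ω₂ = b • ωv := by
    apply Subtype.ext
    rw [hb]
    rfl
  have ha0 : a ≠ 0 := by
    intro h
    rw [h, zero_smul] at hω₁e
    exact hω₁0 hω₁e
  have hb0 : b ≠ 0 := by
    intro h
    rw [h, zero_smul] at hω₂v
    exact hω₂0 hω₂v
  -- values of B
  have orth_e : Orthonormal ℝ ue := by
    rw [orthonormal_iff_ite]
    intro i j
    rw [hue]
    simp only []
    rw [← Submodule.coe_inner]
    exact orthonormal_iff_ite.mp e.orthonormal i j
  have orth_v : Orthonormal ℝ uv := by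
    rw [orthonormal_iff_ite]
    intro i j
    rw [huv]
    simp only []
    rw [← Submodule.coe_inner]
    exact orthonormal_iff_ite.mp v.orthonormal i j
  have hBee : B ωe ωe = 1 := by
    rw [hB ωe ωe ue ue rfl rfl]
    have hmat : (Matrix.of fun i j => (⟪ue i, ue j⟫ : ℝ)) = (1 : Matrix (Fin p) (Fin p) ℝ) := by
      ext i j
      rw [Matrix.of_apply, Matrix.one_apply, orthonormal_iff_ite.mp orth_e i j]
    rw [hmat, Matrix.det_one]
  have hBvv : B ωv ωv = 1 := by
    rw [hB ωv ωv uv uv rfl rfl]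
    have hmat : (Matrix.of fun i j => (⟪uv i, uv j⟫ : ℝ)) = (1 : Matrix (Fin p) (Fin p) ℝ) := by
      ext i j
      rw [Matrix.of_apply, Matrix.one_apply, orthonormal_iff_ite.mp orth_v i j]
    rw [hmat, Matrix.det_one]
  have hBev : B ωe ωv = M.det := by
    rw [hB ωe ωv ue uv rfl rfl]
  -- formAngle = arccos |det M|
  have hform : formAngle B ω₁ ω₂ = Real.arccos |M.det| := by
    rw [formAngle, hω₁e, hω₂v]
    simp only [map_smul, LinearMap.smul_apply, smul_eq_mul]
    rw [hBee, hBvv, hBev]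
    congr 1
    rw [show a * (a * 1) = a ^ 2 by ring, show b * (b * 1) = b ^ 2 by ring,
      Real.sqrt_sq_eq_abs, Real.sqrt_sq_eq_abs]
    rw [abs_mul, abs_mul]
    have haa : |a| ≠ 0 := abs_ne_zero.mpr ha0
    have hbb : |b| ≠ 0 := abs_ne_zero.mpr hb0
    field_simp
  -- transpose matrix for the symmetric side
  set M' : Matrix (Fin p) (Fin p) ℝ := Matrix.of fun i j => (⟪(v i : A), (e j : A)⟫ : ℝ)
    with hM'_def
  have hM'det : |M'.det| = |M.det| := by
    have : M' = M.transpose := by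
      ext i j
      rw [hM'_def, Matrix.of_apply, Matrix.transpose_apply, hM_def, Matrix.of_apply,
        real_inner_comm]
    rw [this, Matrix.det_transpose]
  -- easy direction
  have hhb : hausAngle A₁ A₂ ≤ Real.arccos |M.det| := by
    apply max_le
    · exact dirb A₁ A₂ h₁ e v
    · have := dirb A₂ A₁ h₂ v e
      rwa [hM'det] at this
  constructor
  · -- hard direction
    rw [inv_mul_le_iff₀ hK0, hform]
    by_cases hp : p = 0
    · subst hp
      have : M.det = 1 := Matrix.det_fin_zero
      rw [this, abs_one, Real.arccos_one]
      exact mul_nonneg hK0.le (hausAngle_nonneg A₁ A₂)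
    · have hd := dira hp A₁ A₂ e v
      have hS0' : (0 : ℝ) ≤ ⨆ x : {x : A // x ∈ A₁ ∧ x ≠ 0},
          ⨅ y : {y : A // y ∈ A₂ ∧ y ≠ 0}, lineAngle x.1 y.1 :=
        (supInf_bounds (fun (x : {x : A // x ∈ A₁ ∧ x ≠ 0})
          (y : {y : A // y ∈ A₂ ∧ y ≠ 0}) => lineAngle x.1 y.1)
          (fun _ _ => lineAngle_nonneg _ _) (fun _ _ => lineAngle_le_pi_div_two _ _)).1
      have hfac : Real.pi / 2 * Real.sqrt C ≤ K := by nlinarith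
      have hle_haus : (⨆ x : {x : A // x ∈ A₁ ∧ x ≠ 0},
          ⨅ y : {y : A // y ∈ A₂ ∧ y ≠ 0}, lineAngle x.1 y.1) ≤ hausAngle A₁ A₂ :=
        le_max_left _ _
      calc Real.arccos |M.det|
          ≤ Real.pi / 2 * Real.sqrt C * (⨆ x : {x : A // x ∈ A₁ ∧ x ≠ 0},
            ⨅ y : {y : A // y ∈ A₂ ∧ y ≠ 0}, lineAngle x.1 y.1) := hd
        _ ≤ K * hausAngle A₁ A₂ := by
            apply mul_le_mul hfac hle_haus hS0' hK0.le
  · rw [hform]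
    calc hausAngle A₁ A₂ ≤ Real.arccos |M.det| := hhb
      _ ≤ K * Real.arccos |M.det| := le_mul_of_one_le_left (Real.arccos_nonneg _) hK1

end
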